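/- Conversely, if the interdicted edges { (i,j) : x_{ij} = 1 } form a connected subgraph with k edges and m ≤ k + 1 incident vertices, then there exist binary y, a choice of dummy edge x_{κi*} = 1 for some vertex i* of the subgraph, and nonnegative flows δ with δ_{κi*} = m ≤ k + 1 and δ_{ij}, δ_{ji} ≤ k on interdicted edges (zero elsewhere) satisfying the flow-balance constraints Σ_j (δ_{ji} − δ_{ij}) = y_i − δ_{κi} for all i. -/

import Mathlib

open Finset

lemma count_le_one_of_nodup {α : Type*} [BEq α] [LawfulBEq α]
    {l : List α} (h : l.Nodup) (a : α) : l.count a ≤ 1 := by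
  induction l with
  | nil => simp
  | cons b t ih =>
    rcases List.nodup_cons.mp h with ⟨hb, ht⟩
    rw [List.count_cons]
    by_cases hab : b = a
    · subst hab
      have h0 : t.count b = 0 := List.count_eq_zero.mpr hb
      rw [if_pos (by simp), h0]
    · rw [if_neg (by simpa using hab), add_zero]
      exact ih ht

lemma walk_div {V : Type*} [Fintype V] [DecidableEq V] {G : SimpleGraph V}
    {u v : V} (p : G.Walk u v) (i : V) :
    ((∑ a : V, ((p.darts.map SimpleGraph.Dart.toProd).count (a, i) : ℝ)) -
      ∑ b : V, ((p.darts.map SimpleGraph.Dart.toProd).count (i, b) : ℝ)) =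
      (if v = i then 1 else 0) - (if u = i then 1 else 0) := by
  induction p with
  | nil => simp
  | @cons u w v h q ih =>
    simp only [SimpleGraph.Walk.darts_cons, List.map_cons, List.count_cons, beq_iff_eq]
    push_cast
    rw [Finset.sum_add_distrib, Finset.sum_add_distrib]
    have h1 : (∑ a : V, (if ((u, w) = (a, i)) then (1:ℝ) else 0)) =
        if w = i then 1 else 0 := by
      by_cases hw : w = i
      · subst hw; simp [Prod.ext_iff]
      · simp [Prod.ext_iff, hw]
    have h2 : (∑ b : V, (if ((u, w) = (i, b)) then (1:ℝ) else 0)) =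
        if u = i then 1 else 0 := by
      by_cases hu : u = i
      · subst hu; simp [Prod.ext_iff]
      · simp [Prod.ext_iff, hu]
    rw [h1, h2]
    linarith [ih]

/-- The subgraph formed by the interdicted lines `{(i,j) : x_{ij} = 1}`. -/
def interdictedGraph {nb : ℕ} (E : Finset (Fin nb × Fin nb))
    (x : Fin nb × Fin nb → ℝ) : SimpleGraph (Fin nb) where
  Adj a b := a ≠ b ∧ (((a, b) ∈ E ∧ x (a, b) = 1) ∨ ((b, a) ∈ E ∧ x (b, a) = 1))
  symm := by
    constructor
    intro a b h
    exact ⟨h.1.symm, h.2.symm⟩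
  loopless := by
    constructor
    intro a h
    exact h.1 rfl

set_option maxHeartbeats 1000000 in
/-- Conversely: if the interdicted edges form a connected subgraph with `k ≥ 1`
edges and at most `k + 1` incident vertices, then there is a choice of dummy
edge at some incident vertex `i*` and nonnegative flows `δ` (supported on the
interdicted edges, with `δ_{κi*} = Σ_i y_i ≤ k + 1` and `δ ≤ k` on interdicted
edges, zero elsewhere) satisfying all the single-commodity flow-balance
constraints. -/
theorem connected_implies_topological_flow
    {nb : ℕ} (E : Finset (Fin nb × Fin nb)) (k : ℕ) (hk1 : 1 ≤ k)
    (x : Fin nb × Fin nb → ℝ) (y : Fin nb → ℝ)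
    (hxbin : ∀ e, x e = 0 ∨ x e = 1)
    (hknum : ∑ e ∈ E, x e = (k : ℝ))
    (hxsupp : ∀ e, x e = 1 → e ∈ E)
    -- y_i = 1 iff bus i is an endpoint of some interdicted line
    (hy : ∀ i, (y i = 1 ↔ ∃ e ∈ E, x e = 1 ∧ (e.1 = i ∨ e.2 = i)) ∧
               (y i = 0 ∨ y i = 1))
    -- the interdicted subgraph is connected: any two endpoints are reachable
    (hconn : ∀ u v : Fin nb, y u = 1 → y v = 1 →
      (interdictedGraph E x).Reachable u v)
    -- a connected graph with k edges has at most k + 1 incident vertices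
    (hcard : (Finset.univ.filter (fun i => y i = 1)).card ≤ k + 1) :
    ∃ (istar : Fin nb) (xκ : Fin nb → ℝ)
      (δf δr : Fin nb × Fin nb → ℝ) (δκ : Fin nb → ℝ),
      y istar = 1 ∧ xκ istar = 1 ∧ (∀ i, xκ i = 0 ∨ xκ i = 1) ∧
      (∑ i, xκ i) = 1 ∧
      δκ istar = ∑ i, y i ∧ δκ istar ≤ (k : ℝ) + 1 ∧
      (∀ i, 0 ≤ δκ i ∧ δκ i ≤ ((k : ℝ) + 1) * xκ i) ∧
      (∀ e ∈ E, (0 ≤ δf e ∧ δf e ≤ (k : ℝ) * x e) ∧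
                 (0 ≤ δr e ∧ δr e ≤ (k : ℝ) * x e)) ∧
      (∀ e, e ∉ E → δf e = 0 ∧ δr e = 0) ∧
      (∀ i : Fin nb,
        ((∑ e ∈ E.filter (fun e => e.2 = i), δf e) +
         (∑ e ∈ E.filter (fun e => e.1 = i), δr e)) -
        ((∑ e ∈ E.filter (fun e => e.1 = i), δf e) +
         (∑ e ∈ E.filter (fun e => e.2 = i), δr e)) = y i - δκ i) := by
  classical
  set G := interdictedGraph E x with hG
  -- there is at least one interdicted edge
  have hex : ∃ e, e ∈ E ∧ x e = 1 := by
    by_contra hno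
    push_neg at hno
    have h0 : ∑ e ∈ E, x e = 0 :=
      Finset.sum_eq_zero fun e he => ((hxbin e).resolve_right (hno e he))
    have hk0 : (k : ℝ) = 0 := by rw [← hknum, h0]
    have : k = 0 := by exact_mod_cast hk0
    omega
  obtain ⟨e0, he0E, he0x⟩ := hex
  set istar := e0.1 with histar
  have hist : y istar = 1 := (hy istar).1.mpr ⟨e0, he0E, he0x, Or.inl rfl⟩
  set S : Finset (Fin nb) := Finset.univ.filter (fun i => y i = 1) with hS
  have hyS : ∀ i, i ∈ S ↔ y i = 1 := fun i => by simp [hS]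
  have histS : istar ∈ S := (hyS istar).mpr hist
  have hScard : S.card ≤ k + 1 := hcard
  have hy0 : ∀ i, i ∉ S → y i = 0 := fun i hi =>
    ((hy i).2).resolve_right (fun h1 => hi ((hyS i).mpr h1))
  have hsumy : ∑ i, y i = (S.card : ℝ) := by
    rw [← Finset.sum_subset (Finset.subset_univ S) (fun i _ hi => hy0 i hi)]
    rw [Finset.sum_congr rfl (fun i hi => (hyS i).mp hi)]
    simp
  -- walks from istar to every vertex of S
  have hwalk : ∀ v ∈ S, Nonempty (G.Walk istar v) :=
    fun v hv => hconn istar v hist ((hyS v).mp hv)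
  let L : Fin nb → List (Fin nb × Fin nb) := fun v =>
    if h : v ∈ S then
      ((hwalk v h).some.toPath : G.Walk istar v).darts.map SimpleGraph.Dart.toProd
    else []
  have hLnodup : ∀ v, (L v).Nodup := by
    intro v
    by_cases h : v ∈ S
    · simp only [L, dif_pos h]
      exact (SimpleGraph.Walk.darts_nodup_of_support_nodup
        ((hwalk v h).some.toPath.2.support_nodup)).map SimpleGraph.Dart.toProd_injective
    · simp [L, h]
  have hListar : L istar = [] := by
    simp only [L, dif_pos histS]
    rw [SimpleGraph.Path.loop_eq ((hwalk istar histS).some.toPath)]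
    simp [SimpleGraph.Path.nil]
  have hLadj : ∀ v, ∀ z ∈ L v, G.Adj z.1 z.2 := by
    intro v z hz
    by_cases h : v ∈ S
    · simp only [L, dif_pos h, List.mem_map] at hz
      obtain ⟨d, _, rfl⟩ := hz
      exact d.adj
    · simp [L, h] at hz
  have hLdiv : ∀ v ∈ S, ∀ i,
      ((∑ a, ((L v).count (a, i) : ℝ)) - ∑ b, ((L v).count (i, b) : ℝ)) =
        (if v = i then 1 else 0) - (if istar = i then 1 else 0) := by
    intro v hv i
    simp only [L, dif_pos hv]
    exact walk_div _ i
  -- the aggregate flow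
  set C : Fin nb × Fin nb → ℝ := fun z => ∑ v ∈ S, ((L v).count z : ℝ) with hCdef
  have hC0 : ∀ z, 0 ≤ C z := fun z => Finset.sum_nonneg (fun v _ => by positivity)
  have hCk : ∀ z, C z ≤ (k : ℝ) := by
    intro z
    have h1 : C z = ((L istar).count z : ℝ) + ∑ v ∈ S.erase istar, ((L v).count z : ℝ) :=
      (Finset.add_sum_erase S (fun v => ((L v).count z : ℝ)) histS).symm
    rw [hListar] at h1
    simp only [List.count_nil, Nat.cast_zero, zero_add] at h1
    rw [h1]
    have hcardle : (S.erase istar).card ≤ k := by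
      rw [Finset.card_erase_of_mem histS]; omega
    calc ∑ v ∈ S.erase istar, ((L v).count z : ℝ)
        ≤ ∑ _v ∈ S.erase istar, (1:ℝ) := Finset.sum_le_sum (fun v _ => by
          exact_mod_cast count_le_one_of_nodup (hLnodup v) z)
      _ = ((S.erase istar).card : ℝ) := by simp
      _ ≤ (k : ℝ) := by exact_mod_cast hcardle
  have hCsupp : ∀ z : Fin nb × Fin nb, C z ≠ 0 →
      ((z ∈ E ∧ x z = 1) ∨ ((z.2, z.1) ∈ E ∧ x (z.2, z.1) = 1)) := by
    intro z hz
    have hex2 : ∃ v ∈ S, ((L v).count z : ℝ) ≠ 0 := by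
      by_contra hno
      push_neg at hno
      exact hz (Finset.sum_eq_zero hno)
    obtain ⟨v, hv, hcnt⟩ := hex2
    have hzmem : z ∈ L v := by
      by_contra hzm
      exact hcnt (by simp [List.count_eq_zero.mpr hzm])
    have hadj := hLadj v z hzmem
    have h2 : (((z.1, z.2) ∈ E ∧ x (z.1, z.2) = 1) ∨
        ((z.2, z.1) ∈ E ∧ x (z.2, z.1) = 1)) := hadj.2
    simpa using h2
  -- definitions of the witnesses
  set xκ : Fin nb → ℝ := fun i => if i = istar then 1 else 0 with hxκ
  set δκ : Fin nb → ℝ := fun i => if i = istar then (S.card : ℝ) else 0 with hδκ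
  set canon : Fin nb × Fin nb → Prop := fun z => z ∈ E ∧ x z = 1 with hcanon
  set δf : Fin nb × Fin nb → ℝ := fun e => if canon e then C e else 0 with hδf
  set δr : Fin nb × Fin nb → ℝ :=
    fun e => if canon e ∧ ¬ canon (e.2, e.1) then C (e.2, e.1) else 0 with hδr
  have hδfE0 : ∀ e, e ∉ E → δf e = 0 := by
    intro e he
    rw [hδf]
    exact if_neg (fun hc => he hc.1)
  have hδrE0 : ∀ e, e ∉ E → δr e = 0 := by
    intro e he
    rw [hδr]
    exact if_neg (fun hc => he hc.1.1)
  -- key superposition identity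
  have hkey : ∀ z : Fin nb × Fin nb, δf z + δr (z.2, z.1) = C z := by
    intro z
    by_cases hc : canon z
    · have hnot : ¬ (canon (z.2, z.1) ∧ ¬ canon ((z.2, z.1).2, (z.2, z.1).1)) := by
        rintro ⟨_, h⟩
        exact h (by simpa using hc)
      simp only [hδf, hδr, if_pos hc, if_neg hnot, add_zero]
    · by_cases hc' : canon (z.2, z.1)
      · have hcond : canon (z.2, z.1) ∧ ¬ canon ((z.2, z.1).2, (z.2, z.1).1) := by
          refine ⟨hc', fun h => hc (by simpa using h)⟩
        simp only [hδf, hδr, if_neg hc, if_pos hcond, zero_add]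
      · have hz0 : C z = 0 := by
          by_contra h
          rcases hCsupp z h with h1 | h2
          · exact hc h1
          · exact hc' h2
        have hnot : ¬ (canon (z.2, z.1) ∧ ¬ canon ((z.2, z.1).2, (z.2, z.1).1)) := by
          rintro ⟨h, _⟩; exact hc' h
        simp only [hδf, hδr, if_neg hc, if_neg hnot, add_zero, hz0]
  have hext : ∀ (g : Fin nb × Fin nb → ℝ), (∀ e, e ∉ E → g e = 0) → ∀ i : Fin nb,
      (∑ e ∈ E.filter (fun e => e.2 = i), g e = ∑ a, g (a, i)) ∧
      (∑ e ∈ E.filter (fun e => e.1 = i), g e = ∑ b, g (i, b)) := by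
    intro g hg i
    constructor
    · rw [Finset.sum_subset (Finset.filter_subset_filter _ (Finset.subset_univ E))
        (fun e he hne => hg e (fun heE =>
          hne (Finset.mem_filter.mpr ⟨heE, (Finset.mem_filter.mp he).2⟩)))]
      rw [Finset.sum_filter, Fintype.sum_prod_type]
      exact Finset.sum_congr rfl (fun a _ => by simp)
    · rw [Finset.sum_subset (Finset.filter_subset_filter _ (Finset.subset_univ E))
        (fun e he hne => hg e (fun heE =>
          hne (Finset.mem_filter.mpr ⟨heE, (Finset.mem_filter.mp he).2⟩)))]
      rw [Finset.sum_filter, Fintype.sum_prod_type, Finset.sum_comm]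
      exact Finset.sum_congr rfl (fun b _ => by simp)
  refine ⟨istar, xκ, δf, δr, δκ, hist, by simp [hxκ], ?_, ?_, ?_, ?_, ?_, ?_,
    fun e he => ⟨hδfE0 e he, hδrE0 e he⟩, ?_⟩
  · intro i
    by_cases h : i = istar <;> simp [hxκ, h]
  · simp [hxκ]
  · simp [hδκ, hsumy]
  · rw [hδκ]
    simp only [if_pos rfl]
    exact_mod_cast hScard
  · intro i
    by_cases h : i = istar
    · subst h
      simp only [hδκ, hxκ, if_pos rfl, mul_one]
      constructor
      · positivity
      · exact_mod_cast hScard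
    · simp [hδκ, hxκ, h]
  · intro e heE
    have hx01 := hxbin e
    constructor
    · constructor
      · simp only [hδf]
        split
        · exact hC0 e
        · exact le_refl 0
      · simp only [hδf]
        by_cases hc : canon e
        · rw [if_pos hc, hc.2, mul_one]; exact hCk e
        · rw [if_neg hc]
          rcases hx01 with h0 | h1
          · rw [h0]; simp
          · rw [h1, mul_one]; positivity
    · constructor
      · simp only [hδr]
        split
        · exact hC0 _
        · exact le_refl 0
      · simp only [hδr]
        by_cases hc : canon e ∧ ¬ canon (e.2, e.1)
        · rw [if_pos hc, hc.1.2, mul_one]; exact hCk _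
        · rw [if_neg hc]
          rcases hx01 with h0 | h1
          · rw [h0]; simp
          · rw [h1, mul_one]; positivity
  · intro i
    rw [(hext δf hδfE0 i).1, (hext δr hδrE0 i).2, (hext δf hδfE0 i).2,
      (hext δr hδrE0 i).1]
    have hin : (∑ a, δf (a, i)) + (∑ b, δr (i, b)) = ∑ a, C (a, i) := by
      rw [← Finset.sum_add_distrib]
      exact Finset.sum_congr rfl (fun a _ => hkey (a, i))
    have hout : (∑ b, δf (i, b)) + (∑ a, δr (a, i)) = ∑ b, C (i, b) := by
      rw [← Finset.sum_add_distrib]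
      exact Finset.sum_congr rfl (fun b _ => hkey (i, b))
    have hdiv : (∑ a, C (a, i)) - (∑ b, C (i, b)) = y i - δκ i := by
      have h1 : ∑ a, C (a, i) = ∑ v ∈ S, ∑ a, ((L v).count (a, i) : ℝ) :=
        Finset.sum_comm
      have h2 : ∑ b, C (i, b) = ∑ v ∈ S, ∑ b, ((L v).count (i, b) : ℝ) :=
        Finset.sum_comm
      rw [h1, h2, ← Finset.sum_sub_distrib,
        Finset.sum_congr rfl (fun v hv => hLdiv v hv i), Finset.sum_sub_distrib]
      have ha : ∑ v ∈ S, (if v = i then (1:ℝ) else 0) = y i := by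
        rw [Finset.sum_ite_eq' S i (fun _ => (1:ℝ))]
        by_cases hi : i ∈ S
        · rw [if_pos hi, (hyS i).mp hi]
        · rw [if_neg hi, hy0 i hi]
      have hb : ∑ v ∈ S, (if istar = i then (1:ℝ) else 0) = δκ i := by
        simp only [hδκ]
        by_cases hi : istar = i
        · subst hi
          simp
        · have hi' : ¬ (i = istar) := fun h => hi h.symm
          simp [hi, hi']
      rw [ha, hb]
    linarith [hin, hout, hdiv]
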